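/- Let Γ = F ⋉ ℤ², where F is a free subgroup of finite index in SL(2,ℤ) acting naturally on ℤ². Then Γ is locally indicable but admits no left-invariant order that is recurrent for every cyclic subgroup. -/

import Mathlib

/-- `r` is a left-invariant (strict total) order on the group `Γ`. -/
def IsLeftInvariantOrder {Γ : Type*} [Group Γ] (r : Γ → Γ → Prop) : Prop :=
  (∀ a, ¬ r a a) ∧ (∀ a b c, r a b → r b c → r a c) ∧
  (∀ a b, a ≠ b → r a b ∨ r b a) ∧ (∀ γ a b, r a b → r (γ * a) (γ * b))

/-- The order `r` is recurrent for every cyclic subgroup: for every `γ` and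
every increasing chain `λ₁ ≺ ⋯ ≺ λ_r` there exist arbitrarily large positive
integers `n` with `λ₁γⁿ ≺ ⋯ ≺ λ_rγⁿ`. -/
def IsRecurrentOrder {Γ : Type*} [Group Γ] (r : Γ → Γ → Prop) : Prop :=
  ∀ (γ : Γ) (k : ℕ) (lam : Fin k → Γ),
    (∀ i j : Fin k, i < j → r (lam i) (lam j)) →
    ∀ N : ℕ, ∃ n : ℕ, N ≤ n ∧ 0 < n ∧
      ∀ i j : Fin k, i < j → r (lam i * γ ^ n) (lam j * γ ^ n)

/-- The semidirect product `F ⋉ ℤ²`, for a free finite-index subgroup `F` of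
`SL(2,ℤ)` acting by matrix multiplication, is locally indicable but admits no
left-invariant order that is recurrent for every cyclic subgroup. -/

lemma negVec (a b : ℤ) : -(![a, b] : Fin 2 → ℤ) = ![-a, -b] := by
  funext i; fin_cases i <;> simp

section Cone
variable (P : (Fin 2 → ℤ) → Prop)

lemma cone_nsmul (hadd : ∀ u v, P u → P v → P (u + v)) :
    ∀ v, P v → ∀ n : ℤ, 0 < n → P (n • v) := by
  intro v hv n hn
  obtain ⟨m, hm⟩ : ∃ m : ℕ, n = (m : ℤ) + 1 := by
    refine ⟨(n - 1).toNat, by omega⟩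
  subst hm
  induction m with
  | zero => simpa using hv
  | succ k ih =>
      have h2 : (((k+1 : ℕ) : ℤ) + 1) • v = ((k : ℤ) + 1) • v + v := by
        push_cast; rw [add_smul, one_smul]
      rw [h2]
      exact hadd _ _ (ih (by positivity)) hv

lemma cone_descent (hadd : ∀ u v, P u → P v → P (u + v))
    (hasym : ∀ v, P v → P (-v) → False)
    (htot : ∀ v, v ≠ 0 → P v ∨ P (-v)) :
    ∀ (v : Fin 2 → ℤ) (n : ℤ), 0 < n → P (n • v) → P v := by
  intro v n hn hnv
  by_cases hv0 : v = 0
  · subst hv0; rw [smul_zero] at hnv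
    exact absurd hnv (fun h => hasym 0 h (by simpa using h))
  rcases htot v hv0 with h | h
  · exact h
  · exact absurd hnv (fun hh => hasym (n • v) hh (by
      have : P (n • (-v)) := cone_nsmul P hadd _ h n hn
      simpa using this))

lemma cone_combo (hadd : ∀ u v, P u → P v → P (u + v))
    (hasym : ∀ v, P v → P (-v) → False)
    (htot : ∀ v, v ≠ 0 → P v ∨ P (-v))
    (he1 : P ![1, 0]) {p q a b : ℤ} (hq : 0 < q) (hx : P ![p, q])
    (hb : 0 < b) (key : 0 < a * q - b * p) : P ![a, b] := by
  apply cone_descent P hadd hasym htot _ q hq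
  have h1 : P ((a * q - b * p) • ![1, 0]) := cone_nsmul P hadd _ he1 _ key
  have h2 : P (b • ![p, q]) := cone_nsmul P hadd _ hx _ hb
  have h3 := hadd _ _ h1 h2
  have heq : (a * q - b * p) • (![1, 0] : Fin 2 → ℤ) + b • ![p, q] = q • ![a, b] := by
    funext i; fin_cases i <;> (simp [Pi.smul_apply, smul_eq_mul]; ring)
  rwa [heq] at h3

lemma cone_halfplane_aux (hadd : ∀ u v, P u → P v → P (u + v))
    (hasym : ∀ v, P v → P (-v) → False)
    (htot : ∀ v, v ≠ 0 → P v ∨ P (-v))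
    (he1 : P ![1, 0]) :
    ∃ c d : ℝ, ¬(c = 0 ∧ d = 0) ∧
      ∀ a b : ℤ, 0 < c * a + d * b → P ![a, b] := by
  by_cases hS : ∃ x y : ℤ, 0 < y ∧ P ![x, y]
  · set S : Set ℝ := {t | ∃ x y : ℤ, 0 < y ∧ P ![x, y] ∧ t = (x : ℝ) / (y : ℝ)} with hSdef
    have hSne : S.Nonempty := by
      obtain ⟨x, y, hy, hP⟩ := hS; exact ⟨_, x, y, hy, hP, rfl⟩
    have step : ∀ a b : ℤ, 0 < b → (∃ t ∈ S, t < (a : ℝ) / (b : ℝ)) → P ![a, b] := by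
      rintro a b hb ⟨t, ⟨x, y, hy, hP, rfl⟩, ht⟩
      have hyR : (0 : ℝ) < (y : ℝ) := by exact_mod_cast hy
      have hbR : (0 : ℝ) < (b : ℝ) := by exact_mod_cast hb
      have hx : ((x : ℝ) * b < a * y) := by rwa [div_lt_div_iff₀ hyR hbR] at ht
      have hZ : x * b < a * y := by exact_mod_cast hx
      exact cone_combo P hadd hasym htot he1 hy hP hb (by linarith)
    by_cases hB : BddBelow S
    · refine ⟨1, -sInf S, by simp, ?_⟩
      intro a b hab
      have hab' : (0 : ℝ) < (a : ℝ) - sInf S * b := by linarith [hab]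
      rcases lt_trichotomy b 0 with hb | hb | hb
      · have hvne : (![a, b] : Fin 2 → ℤ) ≠ 0 := by
          intro h; have := congrFun h 1; simp at this; omega
        rcases htot _ hvne with h | h
        · exact h
        · exfalso
          rw [negVec] at h
          have hnb : 0 < -b := by omega
          have hmem : ((-a : ℤ) : ℝ) / ((-b : ℤ) : ℝ) ∈ S := ⟨-a, -b, hnb, h, rfl⟩
          have hinf : sInf S ≤ ((-a : ℤ) : ℝ) / ((-b : ℤ) : ℝ) := csInf_le hB hmem
          have heq : ((-a : ℤ) : ℝ) / ((-b : ℤ) : ℝ) = (a : ℝ) / (b : ℝ) := by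
            push_cast; rw [neg_div_neg_eq]
          rw [heq] at hinf
          have hbR : ((b : ℝ)) < 0 := by exact_mod_cast hb
          have hbne : ((b : ℝ)) ≠ 0 := ne_of_lt hbR
          have := mul_le_mul_of_nonpos_right hinf (le_of_lt hbR)
          rw [div_mul_cancel₀ _ hbne] at this
          linarith
      · subst hb
        have haR : (0 : ℝ) < (a : ℝ) := by simpa using hab'
        have ha : 0 < a := by exact_mod_cast haR
        have : P (a • ![1, 0]) := cone_nsmul P hadd _ he1 _ ha
        have heq : a • (![1, 0] : Fin 2 → ℤ) = ![a, 0] := by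
          funext i; fin_cases i <;> simp
        rwa [heq] at this
      · have hbR : (0 : ℝ) < (b : ℝ) := by exact_mod_cast hb
        have hlt : sInf S < (a : ℝ) / (b : ℝ) := by
          rw [lt_div_iff₀ hbR]; linarith
        exact step a b hb (exists_lt_of_csInf_lt hSne hlt)
    · refine ⟨0, 1, by simp, ?_⟩
      intro a b hab
      have hb : 0 < b := by
        have : (0 : ℝ) < (b : ℝ) := by linarith [hab]
        exact_mod_cast this
      exact step a b hb ((not_bddBelow_iff.mp hB) _)
  · refine ⟨0, -1, by simp, ?_⟩
    intro a b hab
    have hbR : ((b : ℝ)) < 0 := by linarith [hab]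
    have hb : b < 0 := by exact_mod_cast hbR
    have hvne : (![a, b] : Fin 2 → ℤ) ≠ 0 := by
      intro h; have := congrFun h 1; simp at this; omega
    rcases htot _ hvne with h | h
    · exact h
    · exfalso
      rw [negVec] at h
      exact hS ⟨-a, -b, by omega, h⟩

lemma cone_halfplane (hadd : ∀ u v, P u → P v → P (u + v))
    (hasym : ∀ v, P v → P (-v) → False)
    (htot : ∀ v, v ≠ 0 → P v ∨ P (-v)) :
    ∃ c d : ℝ, ¬(c = 0 ∧ d = 0) ∧
      ∀ a b : ℤ, 0 < c * a + d * b → P ![a, b] := by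
  have he1ne : (![1, 0] : Fin 2 → ℤ) ≠ 0 := by
    intro h; have := congrFun h 0; simp at this
  rcases htot _ he1ne with he1 | he1
  · exact cone_halfplane_aux P hadd hasym htot he1
  · set P' : (Fin 2 → ℤ) → Prop := fun v => P (-v) with hP'
    have hadd' : ∀ u v, P' u → P' v → P' (u + v) := by
      intro u v hu hv; simp only [hP', neg_add] at *; exact hadd _ _ hu hv
    have hasym' : ∀ v, P' v → P' (-v) → False := by
      intro v h1 h2; simp only [hP', neg_neg] at h2; exact hasym _ h2 h1
    have htot' : ∀ v, v ≠ 0 → P' v ∨ P' (-v) := by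
      intro v hv
      rcases htot v hv with h | h
      · right; simpa [hP'] using h
      · left; exact h
    have he1' : P' ![1, 0] := he1
    obtain ⟨c, d, hcd, hhalf⟩ := cone_halfplane_aux P' hadd' hasym' htot' he1'
    refine ⟨-c, -d, by intro ⟨h1, h2⟩; exact hcd ⟨by linarith, by linarith⟩, ?_⟩
    intro a b hab
    have := hhalf (-a) (-b) (by push_cast; linarith)
    simp only [hP', negVec, neg_neg] at this
    exact this
set_option maxHeartbeats 2000000 in

lemma dyn_aux (c d : ℝ) (B00 B01 B10 B11 : ℤ) (u w l l' : ℝ)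
    (hu0 : (B00 : ℝ) * u + B01 = l * u) (hu1 : (B10 : ℝ) * u + B11 = l)
    (hw0 : (B00 : ℝ) * w + B01 = l' * w) (hw1 : (B10 : ℝ) * w + B11 = l')
    (hl : 1 < l) (hl'0 : 0 < l') (hl'1 : l' ≤ 1)
    (huw : u ≠ w) (hfu : c * u + d ≠ 0) (hfw : c * w + d ≠ 0) :
    ∃ (μ : Fin 2 → ℤ) (N₀ : ℕ),
      0 < c * (μ 0 : ℝ) + d * (μ 1 : ℝ) ∧
      ∀ m : ℕ, N₀ ≤ m →
        c * (((!![B00, B01; B10, B11] ^ m).mulVec μ 0 : ℤ) : ℝ) +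
          d * (((!![B00, B01; B10, B11] ^ m).mulVec μ 1 : ℤ) : ℝ) < 0 := by
  have hD : u - w ≠ 0 := sub_ne_zero.mpr huw
  set e : ℝ := (c * u + d) / (u - w) with he_def
  have he : e ≠ 0 := div_ne_zero hfu hD
  set Δ : ℝ := -(e * (c * w + d)) with hΔ_def
  have hΔ : Δ ≠ 0 := by
    simp only [hΔ_def, neg_ne_zero]; exact mul_ne_zero he hfw
  set p0 : ℝ := (d - e * w) / Δ with hp0_def
  set p1 : ℝ := (-c - e) / Δ with hp1_def
  have heq1 : c * p0 + d * p1 = 1 := by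
    rw [hp0_def, hp1_def]; field_simp [hΔ_def]; ring
  have heq2 : e * p0 - e * w * p1 = -1 := by
    rw [hp0_def, hp1_def]; field_simp [hΔ_def]; ring
  obtain ⟨n, hn⟩ := exists_nat_gt (max (|c| + |d|) (|e| + |e * w|))
  have hn1 : |c| + |d| < n := lt_of_le_of_lt (le_max_left _ _) hn
  have hn2 : |e| + |e * w| < n := lt_of_le_of_lt (le_max_right _ _) hn
  set μ0 : ℤ := ⌊(n : ℝ) * p0⌋ with hμ0_def
  set μ1 : ℤ := ⌊(n : ℝ) * p1⌋ with hμ1_def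
  set δ0 : ℝ := (n : ℝ) * p0 - μ0 with hδ0_def
  set δ1 : ℝ := (n : ℝ) * p1 - μ1 with hδ1_def
  have hδ0b : 0 ≤ δ0 ∧ δ0 < 1 := by
    constructor
    · simp only [hδ0_def, hμ0_def, sub_nonneg]; exact Int.floor_le _
    · simp only [hδ0_def, hμ0_def, sub_lt_iff_lt_add]
      linarith [Int.lt_floor_add_one ((n : ℝ) * p0)]
  have hδ1b : 0 ≤ δ1 ∧ δ1 < 1 := by
    constructor
    · simp only [hδ1_def, hμ1_def, sub_nonneg]; exact Int.floor_le _
    · simp only [hδ1_def, hμ1_def, sub_lt_iff_lt_add]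
      linarith [Int.lt_floor_add_one ((n : ℝ) * p1)]
  have hμ0R : (μ0 : ℝ) = (n : ℝ) * p0 - δ0 := by rw [hδ0_def]; ring
  have hμ1R : (μ1 : ℝ) = (n : ℝ) * p1 - δ1 := by rw [hδ1_def]; ring
  have habs : ∀ t s : ℝ, 0 ≤ s → s < 1 → t * s ≤ |t| := by
    intro t s hs0 hs1
    calc t * s ≤ |t * s| := le_abs_self _
    _ = |t| * |s| := abs_mul t s
    _ ≤ |t| * 1 := by
        apply mul_le_mul_of_nonneg_left _ (abs_nonneg t)
        rw [abs_of_nonneg hs0]; linarith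
    _ = |t| := mul_one _
  have hnval : c * ((n : ℝ) * p0) + d * ((n : ℝ) * p1) = n := by
    linear_combination (n : ℝ) * heq1
  have hf : 0 < c * (μ0 : ℝ) + d * (μ1 : ℝ) := by
    have h1 : c * δ0 ≤ |c| := habs c δ0 hδ0b.1 hδ0b.2
    have h2 : d * δ1 ≤ |d| := habs d δ1 hδ1b.1 hδ1b.2
    rw [hμ0R, hμ1R]
    nlinarith
  have hgval : e * ((n : ℝ) * p0) - e * w * ((n : ℝ) * p1) = -n := by
    linear_combination (n : ℝ) * heq2
  have hg : e * (μ0 : ℝ) - e * w * (μ1 : ℝ) < 0 := by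
    have h1 : -e * δ0 ≤ |e| := by
      have := habs (-e) δ0 hδ0b.1 hδ0b.2; simpa using this
    have h2 : e * w * δ1 ≤ |e * w| := habs (e * w) δ1 hδ1b.1 hδ1b.2
    rw [hμ0R, hμ1R]
    nlinarith
  -- eigencoordinates
  set a : ℝ := ((μ0 : ℝ) - (μ1 : ℝ) * w) / (u - w) with ha_def
  set b : ℝ := ((μ1 : ℝ) * u - (μ0 : ℝ)) / (u - w) with hb_def
  have hμ0eq : (μ0 : ℝ) = a * u + b * w := by
    rw [ha_def, hb_def]; field_simp; ring
  have hμ1eq : (μ1 : ℝ) = a + b := by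
    rw [ha_def, hb_def]; field_simp; ring
  have hga : (c * u + d) * a = e * (μ0 : ℝ) - e * w * (μ1 : ℝ) := by
    rw [ha_def, he_def]; field_simp
  have hfa_neg : (c * u + d) * a < 0 := by rw [hga]; exact hg
  set Bm : Matrix (Fin 2) (Fin 2) ℤ := !![B00, B01; B10, B11] with hBm_def
  set μ : Fin 2 → ℤ := ![μ0, μ1] with hμ_def
  set X : ℕ → Fin 2 → ℤ := fun m => (Bm ^ m).mulVec μ with hX_def
  have hmv0 : ∀ v : Fin 2 → ℤ, Bm.mulVec v 0 = B00 * v 0 + B01 * v 1 := by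
    intro v
    simp [hBm_def, Matrix.mulVec, dotProduct, Fin.sum_univ_two, Matrix.vecHead, Matrix.vecTail]
  have hmv1 : ∀ v : Fin 2 → ℤ, Bm.mulVec v 1 = B10 * v 0 + B11 * v 1 := by
    intro v
    simp [hBm_def, Matrix.mulVec, dotProduct, Fin.sum_univ_two, Matrix.vecHead, Matrix.vecTail]
  have hXsucc : ∀ m, X (m + 1) = Bm.mulVec (X m) := by
    intro m
    simp only [hX_def, pow_succ']
    rw [← Matrix.mulVec_mulVec]
  have key : ∀ m : ℕ, ((X m 0 : ℤ) : ℝ) = a * l ^ m * u + b * l' ^ m * w ∧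
      ((X m 1 : ℤ) : ℝ) = a * l ^ m + b * l' ^ m := by
    intro m
    induction m with
    | zero =>
        constructor
        · have : X 0 0 = μ0 := by simp [hX_def, hμ_def]
          rw [this]; simpa using hμ0eq
        · have : X 0 1 = μ1 := by simp [hX_def, hμ_def]
          rw [this]; simpa using hμ1eq
    | succ m ih =>
        constructor
        · rw [hXsucc, hmv0]
          push_cast
          rw [ih.1, ih.2]
          linear_combination (a * l ^ m) * hu0 + (b * l' ^ m) * hw0
        · rw [hXsucc, hmv1]
          push_cast
          rw [ih.1, ih.2]
          linear_combination (a * l ^ m) * hu1 + (b * l' ^ m) * hw1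
  have ffinal : ∀ m : ℕ, c * ((X m 0 : ℤ) : ℝ) + d * ((X m 1 : ℤ) : ℝ) =
      ((c * u + d) * a) * l ^ m + ((c * w + d) * b) * l' ^ m := by
    intro m; rw [(key m).1, (key m).2]; ring
  set A0 : ℝ := -((c * u + d) * a) with hA0_def
  have hA0 : 0 < A0 := by simp only [hA0_def]; linarith
  set C : ℝ := |(c * w + d) * b| with hC_def
  obtain ⟨N₀, hN₀⟩ := pow_unbounded_of_one_lt (C / A0) hl
  have hCA : C < A0 * l ^ N₀ := by
    rw [div_lt_iff₀ hA0] at hN₀; linarith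
  refine ⟨μ, N₀, ?_, ?_⟩
  · have h0 : μ 0 = μ0 := by simp [hμ_def]
    have h1 : μ 1 = μ1 := by simp [hμ_def]
    rw [h0, h1]; exact hf
  · intro m hm
    have hXm : (!![B00, B01; B10, B11] ^ m).mulVec μ = X m := by
      simp [hX_def, hBm_def]
    rw [hXm]
    have hlm : l ^ N₀ ≤ l ^ m := pow_le_pow_right₀ (le_of_lt hl) hm
    have hl'm1 : l' ^ m ≤ 1 := pow_le_one₀ (le_of_lt hl'0) hl'1
    have hl'm0 : 0 < l' ^ m := pow_pos hl'0 m
    have hb1 : ((c * w + d) * b) * l' ^ m ≤ C := by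
      calc ((c * w + d) * b) * l' ^ m ≤ |((c * w + d) * b) * l' ^ m| := le_abs_self _
      _ = C * |l' ^ m| := by rw [abs_mul]
      _ = C * l' ^ m := by rw [abs_of_pos hl'm0]
      _ ≤ C * 1 := mul_le_mul_of_nonneg_left hl'm1 (abs_nonneg _)
      _ = C := mul_one _
    rw [ffinal m]
    have hterm : ((c * u + d) * a) * l ^ m = -(A0 * l ^ m) := by rw [hA0_def]; ring
    rw [hterm]
    have : A0 * l ^ N₀ ≤ A0 * l ^ m := mul_le_mul_of_nonneg_left hlm (le_of_lt hA0)
    linarith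
lemma dyn_main (c d : ℝ) (hcd : ¬(c = 0 ∧ d = 0)) :
    ∃ (B : Matrix.SpecialLinearGroup (Fin 2) ℤ) (μ : Fin 2 → ℤ) (N₀ : ℕ),
      0 < c * (μ 0 : ℝ) + d * (μ 1 : ℝ) ∧
      ∀ m : ℕ, N₀ ≤ m →
        c * ((((B : Matrix (Fin 2) (Fin 2) ℤ) ^ m).mulVec μ 0 : ℤ) : ℝ) +
          d * ((((B : Matrix (Fin 2) (Fin 2) ℤ) ^ m).mulVec μ 1 : ℤ) : ℝ) < 0 := by
  set g : ℝ := (1 + Real.sqrt 5) / 2 with hg_def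
  have h5 : Real.sqrt 5 ^ 2 = 5 := Real.sq_sqrt (by norm_num)
  have hs2 : 2 < Real.sqrt 5 := by nlinarith [Real.sqrt_nonneg 5]
  have hs3 : Real.sqrt 5 < 3 := by nlinarith [Real.sqrt_nonneg 5]
  have hg2 : g ^ 2 = g + 1 := by rw [hg_def]; field_simp; nlinarith [h5]
  have hg1 : 1 < g := by rw [hg_def]; linarith
  have hglt2 : g < 2 := by rw [hg_def]; linarith
  have hl : 1 < g + 1 := by linarith
  have hl'0 : 0 < 2 - g := by linarith
  have hl'1 : 2 - g ≤ 1 := by linarith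
  by_cases hA : c * g + d ≠ 0 ∧ c * (1 - g) + d ≠ 0
  · have hdet : (!![(2:ℤ), 1; 1, 1]).det = 1 := by simp [Matrix.det_fin_two_of]
    refine ⟨⟨!![2, 1; 1, 1], hdet⟩, ?_⟩
    obtain ⟨μ, N₀, h1, h2⟩ := dyn_aux c d 2 1 1 1 g (1 - g) (g + 1) (2 - g)
      (by push_cast; linear_combination hg2 - h5 / 2)
      (by push_cast; ring)
      (by push_cast; linear_combination hg2 - h5 / 2)
      (by push_cast; ring)
      hl hl'0 hl'1 (by intro h; linarith) hA.1 hA.2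
    exact ⟨μ, N₀, h1, h2⟩
  · have hA' : c * (g + 1) + d ≠ 0 ∧ c * (2 - g) + d ≠ 0 := by
      have hor : c * g + d = 0 ∨ c * (1 - g) + d = 0 := by
        rcases not_and_or.mp hA with h | h
        · exact Or.inl (not_not.mp h)
        · exact Or.inr (not_not.mp h)
      constructor
      · intro hEq
        rcases hor with h | h
        · have hc : c = 0 := by linear_combination hEq - h
          have hd : d = 0 := by linear_combination h - g * hc
          exact hcd ⟨hc, hd⟩
        · have ht : c * g = 0 := by linear_combination (hEq - h) / 2
          have hc : c = 0 := by
            rcases mul_eq_zero.mp ht with h' | h'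
            · exact h'
            · linarith
          have hd : d = 0 := by linear_combination h - (1 - g) * hc
          exact hcd ⟨hc, hd⟩
      · intro hEq
        rcases hor with h | h
        · have ht : c * (g - 1) = 0 := by linear_combination (h - hEq) / 2
          have hc : c = 0 := by
            rcases mul_eq_zero.mp ht with h' | h'
            · exact h'
            · linarith
          have hd : d = 0 := by linear_combination h - g * hc
          exact hcd ⟨hc, hd⟩
        · have hc : c = 0 := by linear_combination hEq - h
          have hd : d = 0 := by linear_combination h - (1 - g) * hc
          exact hcd ⟨hc, hd⟩
    have hdet : (!![(3:ℤ), -1; 1, 0]).det = 1 := by simp [Matrix.det_fin_two_of]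
    refine ⟨⟨!![3, -1; 1, 0], hdet⟩, ?_⟩
    obtain ⟨μ, N₀, h1, h2⟩ := dyn_aux c d 3 (-1) 1 0 (g + 1) (2 - g) (g + 1) (2 - g)
      (by push_cast; linear_combination hg2 - h5 / 2)
      (by push_cast; ring)
      (by push_cast; linear_combination hg2 - h5 / 2)
      (by push_cast; ring)
      hl hl'0 hl'1 (by intro h; linarith) hA'.1 hA'.2
    exact ⟨μ, N₀, h1, h2⟩

lemma free_surj_int (G : Type*) [Group G] [IsFreeGroup G] (x : G) (hx : x ≠ 1) :
    ∃ ψ : G →* Multiplicative ℤ, Function.Surjective ψ := by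
  classical
  by_cases hne : Nonempty (IsFreeGroup.Generators G)
  · obtain ⟨g₀⟩ := hne
    set f : IsFreeGroup.Generators G → Multiplicative ℤ :=
      fun g => if g = g₀ then Multiplicative.ofAdd 1 else 1 with hf
    refine ⟨IsFreeGroup.lift f, ?_⟩
    intro w
    refine ⟨(IsFreeGroup.of g₀) ^ (Multiplicative.toAdd w), ?_⟩
    rw [map_zpow, IsFreeGroup.lift_of]
    simp only [hf, if_pos rfl]
    simp [← ofAdd_zsmul]
  · exfalso
    apply hx
    have hEmpty : IsEmpty (IsFreeGroup.Generators G) := not_nonempty_iff.mp hne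
    have htriv : ∀ y : FreeGroup (IsFreeGroup.Generators G), y = 1 := by
      intro y
      induction y using FreeGroup.induction_on with
      | C1 => rfl
      | of a => exact hEmpty.elim a
      | inv_of a _ => exact hEmpty.elim a
      | mul a b ha hb => rw [ha, hb, mul_one]
    have e := IsFreeGroup.toFreeGroup G
    have : e x = e 1 := by rw [htriv (e x), map_one]
    exact e.injective this

lemma part1_aux (F : Subgroup (Matrix.SpecialLinearGroup (Fin 2) ℤ))
    [IsFreeGroup F]
    (φ : F →* MulAut (Multiplicative (Fin 2 → ℤ)))
    (H : Subgroup (SemidirectProduct (Multiplicative (Fin 2 → ℤ)) F φ))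
    (hne : H ≠ ⊥) :
    ∃ ψ : H →* Multiplicative ℤ, Function.Surjective ψ := by
  classical
  set Γ := SemidirectProduct (Multiplicative (Fin 2 → ℤ)) F φ with hΓ
  by_cases hcase : ∀ h : H, SemidirectProduct.rightHom (h : Γ) = 1
  · -- H sits inside ℤ²
    obtain ⟨h₀, hh₀mem, hh₀⟩ : ∃ x ∈ H, x ≠ 1 := by
      by_contra hc
      push_neg at hc
      exact hne ((Subgroup.eq_bot_iff_forall H).mpr hc)
    set h₀' : H := ⟨h₀, hh₀mem⟩ with hh₀'
    have hright : ∀ h : H, ((h : Γ)).right = 1 := by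
      intro h
      rw [← SemidirectProduct.rightHom_eq_right]
      exact hcase h
    have hl0 : Multiplicative.toAdd ((h₀ : Γ).left) ≠ 0 := by
      intro hz
      apply hh₀
      have h1 : (h₀ : Γ).left = 1 := by simpa using hz
      exact SemidirectProduct.ext (by simpa using h1) (by simpa using hright h₀')
    obtain ⟨i₀, hi₀⟩ : ∃ i, Multiplicative.toAdd ((h₀ : Γ).left) i ≠ 0 :=
      Function.ne_iff.mp hl0
    set cfun : H → ℤ := fun h => Multiplicative.toAdd ((h : Γ).left) i₀ with hcfun
    have hcmul : ∀ h₁ h₂ : H, cfun (h₁ * h₂) = cfun h₁ + cfun h₂ := by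
      intro h₁ h₂
      have hmul : ((h₁ * h₂ : H) : Γ).left
          = (h₁ : Γ).left * φ ((h₁ : Γ).right) ((h₂ : Γ).left) :=
        SemidirectProduct.mul_left _ _
      rw [hright h₁] at hmul
      simp only [map_one, MulAut.one_apply] at hmul
      simp only [hcfun, hmul, toAdd_mul, Pi.add_apply]
    have hcone : cfun 1 = 0 := by simp [hcfun]
    have hcinv : ∀ h : H, cfun h⁻¹ = -cfun h := by
      intro h
      have := hcmul h h⁻¹
      rw [mul_inv_cancel, hcone] at this
      linarith
    set J : AddSubgroup ℤ :=
      { carrier := Set.range cfun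
        add_mem' := by
          rintro a b ⟨x, rfl⟩ ⟨y, rfl⟩
          exact ⟨x * y, hcmul x y⟩
        zero_mem' := ⟨1, hcone⟩
        neg_mem' := by
          rintro a ⟨x, rfl⟩
          exact ⟨x⁻¹, hcinv x⟩ } with hJ
    obtain ⟨g, hg⟩ := Int.subgroup_cyclic J
    have hgd : ∀ h : H, g ∣ cfun h := by
      intro h
      have hmem : cfun h ∈ J := ⟨h, rfl⟩
      rw [hg] at hmem
      obtain ⟨z, hz⟩ := AddSubgroup.mem_closure_singleton.mp hmem
      exact ⟨z, by rw [← hz, zsmul_eq_mul]; push_cast; ring⟩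
    have hgne : g ≠ 0 := by
      intro h0
      have hmem : cfun h₀' ∈ J := ⟨h₀', rfl⟩
      rw [hg, h0] at hmem
      obtain ⟨z, hz⟩ := AddSubgroup.mem_closure_singleton.mp hmem
      rw [smul_zero] at hz
      exact hi₀ (by simpa [hcfun] using hz.symm)
    set ψ : H →* Multiplicative ℤ :=
      { toFun := fun h => Multiplicative.ofAdd (cfun h / g)
        map_one' := by simp [hcone]
        map_mul' := by
          intro h₁ h₂
          show Multiplicative.ofAdd (cfun (h₁ * h₂) / g) = _
          rw [hcmul, Int.add_ediv_of_dvd_left (hgd h₁), ofAdd_add] } with hψ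
    refine ⟨ψ, ?_⟩
    have hgJ : g ∈ J := by
      rw [hg]
      exact AddSubgroup.mem_closure_singleton.mpr ⟨1, one_smul _ _⟩
    obtain ⟨hg₁, hhg₁⟩ := hgJ
    intro w
    refine ⟨hg₁ ^ (Multiplicative.toAdd w), ?_⟩
    rw [map_zpow]
    have hψg : ψ hg₁ = Multiplicative.ofAdd 1 := by
      simp only [hψ, MonoidHom.coe_mk, OneHom.coe_mk, hhg₁, Int.ediv_self hgne]
    rw [hψg]
    simp [← ofAdd_zsmul]
  · push_neg at hcase
    obtain ⟨h₁, hh₁⟩ := hcase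
    set q : H →* F := SemidirectProduct.rightHom.comp H.subtype with hq
    have hq1 : q h₁ ≠ 1 := hh₁
    set K : Subgroup F := q.range with hK
    have hxK : (⟨q h₁, ⟨h₁, rfl⟩⟩ : K) ≠ 1 := by
      intro h
      exact hq1 (by simpa using congrArg Subtype.val h)
    obtain ⟨ψK, hψK⟩ := free_surj_int K _ hxK
    refine ⟨ψK.comp q.rangeRestrict, ?_⟩
    exact hψK.comp q.rangeRestrict_surjective
theorem part2_aux
    (F : Subgroup (Matrix.SpecialLinearGroup (Fin 2) ℤ))
    [IsFreeGroup F] [F.FiniteIndex]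
    (φ : F →* MulAut (Multiplicative (Fin 2 → ℤ)))
    (hφ : ∀ (A : F) (v : Fin 2 → ℤ),
      φ A (Multiplicative.ofAdd v) =
        Multiplicative.ofAdd
          (((A : Matrix.SpecialLinearGroup (Fin 2) ℤ) : Matrix (Fin 2) (Fin 2) ℤ).mulVec v)) :
    ¬ ∃ r : SemidirectProduct (Multiplicative (Fin 2 → ℤ)) F φ →
          SemidirectProduct (Multiplicative (Fin 2 → ℤ)) F φ → Prop,
        IsLeftInvariantOrder r ∧ IsRecurrentOrder r := by
  rintro ⟨r, ⟨hirr, htrans, htotal, hinv⟩, hR⟩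
  set P : (Fin 2 → ℤ) → Prop :=
    fun v => r 1 (SemidirectProduct.inl (Multiplicative.ofAdd v)) with hP
  have hPiff : ∀ v, P v ↔ r 1 (SemidirectProduct.inl (Multiplicative.ofAdd v)) :=
    fun v => Iff.rfl
  have hinlmul : ∀ u v : Fin 2 → ℤ,
      (SemidirectProduct.inl (Multiplicative.ofAdd u) : SemidirectProduct (Multiplicative (Fin 2 → ℤ)) F φ) *
        SemidirectProduct.inl (Multiplicative.ofAdd v) =
        SemidirectProduct.inl (Multiplicative.ofAdd (u + v)) := by
    intro u v
    rw [← map_mul, ← ofAdd_add]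
  have hPadd : ∀ u v, P u → P v → P (u + v) := by
    intro u v hu hv
    have h1 := hinv (SemidirectProduct.inl (Multiplicative.ofAdd u)) _ _ ((hPiff v).mp hv)
    rw [mul_one, hinlmul] at h1
    exact (hPiff _).mpr (htrans _ _ _ ((hPiff u).mp hu) h1)
  have hPasym : ∀ v, P v → P (-v) → False := by
    intro v hv hnv
    have h1 := hinv (SemidirectProduct.inl (Multiplicative.ofAdd v)) _ _ ((hPiff (-v)).mp hnv)
    rw [mul_one, hinlmul] at h1
    rw [add_neg_cancel] at h1
    have h2 : (SemidirectProduct.inl (Multiplicative.ofAdd (0 : Fin 2 → ℤ)) : SemidirectProduct (Multiplicative (Fin 2 → ℤ)) F φ) = 1 := by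
      simp
    rw [h2] at h1
    exact hirr 1 (htrans _ _ _ ((hPiff v).mp hv) h1)
  have hPtot : ∀ v, v ≠ 0 → P v ∨ P (-v) := by
    intro v hv
    have hne : (1 : SemidirectProduct (Multiplicative (Fin 2 → ℤ)) F φ) ≠ SemidirectProduct.inl (Multiplicative.ofAdd v) := by
      intro h
      apply hv
      have h0 : (SemidirectProduct.inl (Multiplicative.ofAdd (0 : Fin 2 → ℤ)) : SemidirectProduct (Multiplicative (Fin 2 → ℤ)) F φ)
          = SemidirectProduct.inl (Multiplicative.ofAdd v) := by
        simpa using h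
      have := SemidirectProduct.inl_injective h0
      simpa using this.symm
    rcases htotal _ _ hne with h | h
    · exact Or.inl ((hPiff v).mpr h)
    · right
      have h1 := hinv (SemidirectProduct.inl (Multiplicative.ofAdd (-v))) _ _ h
      rw [mul_one, hinlmul, neg_add_cancel] at h1
      have h2 : (SemidirectProduct.inl (Multiplicative.ofAdd (0 : Fin 2 → ℤ)) : SemidirectProduct (Multiplicative (Fin 2 → ℤ)) F φ) = 1 := by
        simp
      rw [h2] at h1
      exact (hPiff _).mpr h1
  have hrec : ∀ v, P v → ∀ (A : F) (N : ℕ), ∃ n : ℕ, N ≤ n ∧ 0 < n ∧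
      P (((((A ^ n)⁻¹ : F) : Matrix.SpecialLinearGroup (Fin 2) ℤ) :
          Matrix (Fin 2) (Fin 2) ℤ).mulVec v) := by
    intro v hv A N
    obtain ⟨n, hNn, hn0, hch⟩ := hR (SemidirectProduct.inr A) 2
      ![1, SemidirectProduct.inl (Multiplicative.ofAdd v)]
      (by
        intro i j hij
        fin_cases i <;> fin_cases j <;>
          first
            | exact absurd hij (by decide)
            | simpa using ((hPiff v).mp hv)) N
    refine ⟨n, hNn, hn0, ?_⟩
    have h01 := hch 0 1 (by decide)
    simp only [Matrix.cons_val_zero, Matrix.cons_val_one, Matrix.head_cons, one_mul] at h01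
    have h2 := hinv ((SemidirectProduct.inr A ^ n : SemidirectProduct (Multiplicative (Fin 2 → ℤ)) F φ))⁻¹ _ _ h01
    rw [inv_mul_cancel] at h2
    have hkey : ((SemidirectProduct.inr A : SemidirectProduct (Multiplicative (Fin 2 → ℤ)) F φ) ^ n)⁻¹ *
        (SemidirectProduct.inl (Multiplicative.ofAdd v) * (SemidirectProduct.inr A : SemidirectProduct (Multiplicative (Fin 2 → ℤ)) F φ) ^ n)
        = SemidirectProduct.inl (φ ((A ^ n)⁻¹) (Multiplicative.ofAdd v)) := by
      rw [← map_pow, ← map_inv, SemidirectProduct.inl_aut, inv_inv, mul_assoc]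
    rw [hkey, hφ] at h2
    exact (hPiff _).mpr h2
  obtain ⟨c, d, hcd, hhalf⟩ := cone_halfplane P hPadd hPasym hPtot
  obtain ⟨B, μ, N₀, hμpos, hμneg⟩ := dyn_main c d hcd
  obtain ⟨k, hk0, -, hkF⟩ :=
    Subgroup.exists_pow_mem_of_index_ne_zero (Subgroup.FiniteIndex.index_ne_zero (H := F)) B
  set A : F := (⟨B ^ k, hkF⟩ : F)⁻¹ with hA
  have hPμ : P μ := by
    have h := hhalf (μ 0) (μ 1) hμpos
    have heq : (![μ 0, μ 1] : Fin 2 → ℤ) = μ := by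
      funext i; fin_cases i <;> rfl
    rwa [heq] at h
  obtain ⟨n, hNn, hn0, hPn⟩ := hrec μ hPμ A N₀
  have hmat : ((((A ^ n)⁻¹ : F) : Matrix.SpecialLinearGroup (Fin 2) ℤ) :
      Matrix (Fin 2) (Fin 2) ℤ) = (B : Matrix (Fin 2) (Fin 2) ℤ) ^ (k * n) := by
    rw [hA, inv_pow, inv_inv, SubgroupClass.coe_pow]
    have hc1 : ((⟨B ^ k, hkF⟩ : F) : Matrix.SpecialLinearGroup (Fin 2) ℤ) = B ^ k := rfl
    rw [hc1, ← pow_mul, Matrix.SpecialLinearGroup.coe_pow]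
  rw [hmat] at hPn
  set x : Fin 2 → ℤ := ((B : Matrix (Fin 2) (Fin 2) ℤ) ^ (k * n)).mulVec μ with hx
  have hkn : N₀ ≤ k * n := le_trans hNn (Nat.le_mul_of_pos_left n hk0)
  have hneg := hμneg (k * n) hkn
  have hPx : P (-x) := by
    have h := hhalf (-(x 0)) (-(x 1)) (by push_cast; linarith)
    have heq : (![-(x 0), -(x 1)] : Fin 2 → ℤ) = -x := by
      funext i; fin_cases i <;> rfl
    rwa [heq] at h
  exact hPasym x hPn hPx

theorem semidirect_locallyIndicable_not_recurrent
    (F : Subgroup (Matrix.SpecialLinearGroup (Fin 2) ℤ))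
    [IsFreeGroup F] [F.FiniteIndex]
    (φ : F →* MulAut (Multiplicative (Fin 2 → ℤ)))
    (hφ : ∀ (A : F) (v : Fin 2 → ℤ),
      φ A (Multiplicative.ofAdd v) =
        Multiplicative.ofAdd
          (((A : Matrix.SpecialLinearGroup (Fin 2) ℤ) : Matrix (Fin 2) (Fin 2) ℤ).mulVec v)) :
    (∀ H : Subgroup (SemidirectProduct (Multiplicative (Fin 2 → ℤ)) F φ),
        H ≠ ⊥ → Group.FG H →
        ∃ ψ : H →* Multiplicative ℤ, Function.Surjective ψ) ∧
    ¬ ∃ r : SemidirectProduct (Multiplicative (Fin 2 → ℤ)) F φ →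
          SemidirectProduct (Multiplicative (Fin 2 → ℤ)) F φ → Prop,
        IsLeftInvariantOrder r ∧ IsRecurrentOrder r := by
  refine ⟨fun H hne _ => part1_aux F φ H hne, part2_aux F φ hφ⟩
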